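/- arXiv:1810.07797 — 4 statements merged into one kernel-verified Lean document; each statement's English description precedes it below -/
import Mathlib

section
/- Let K ≥ 1 and 0 < M ≤ K be given with M < K, let λ ≥ 0, and define Z(α, λ) = (1 - M/K) · e^{-α λ M/K} for α ∈ [0,1]. For r > 1 set ΔZ(r, α, λ) = Z(α, λ) - Z(min(rα, 1), λ). Then sup over α ∈ [0,1] and λ ≥ 0 of ΔZ(r, α, λ) equals (1 - M/K) · (e^{-ln r/(r-1)} - e^{-r ln r/(r-1)}), and it is attained at α = 1/r and λ = r ln r / ((r-1) M/K). -/
/-- Key pointwise bound: `exp (-x) - exp (-(r*x))` is maximized at `x* = log r/(r-1)`. -/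
lemma key_exp_bound {r : ℝ} (hr : 1 < r) (x : ℝ) :
    Real.exp (-x) - Real.exp (-(r * x)) ≤
      Real.exp (-(Real.log r / (r - 1))) - Real.exp (-(r * (Real.log r / (r - 1)))) := by
  have hr0 : 0 < r := lt_trans one_pos hr
  have hr1 : 0 < r - 1 := by linarith
  set xs : ℝ := Real.log r / (r - 1) with hxs
  have hrx : Real.exp ((r - 1) * xs) = r := by
    rw [hxs, mul_div_cancel₀ _ (ne_of_gt hr1), Real.exp_log hr0]
  set d : ℝ := x - xs with hd
  set u : ℝ := Real.exp (-d) with hu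
  set e : ℝ := Real.exp (-(r * d)) with he
  set A : ℝ := Real.exp (-xs) with hA'
  have hupos : 0 < u := Real.exp_pos _
  have hA : 0 < A := Real.exp_pos _
  -- Bernoulli: u^r ≥ 1 + r (u - 1)
  have hbern : 1 + r * (u - 1) ≤ e := by
    have h := one_add_mul_self_le_rpow_one_add (s := u - 1) (by linarith) (p := r) (le_of_lt hr)
    have hur : (1 + (u - 1)) ^ r = e := by
      rw [show (1 : ℝ) + (u - 1) = u by ring, hu, ← Real.exp_mul, he]
      ring_nf
    linarith [hur ▸ h]
  -- rewrite exponentials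
  have h1 : Real.exp (-x) = A * u := by
    rw [hA', hu, ← Real.exp_add]; congr 1; rw [hd]; ring
  have h3 : Real.exp (-(r * xs)) = A / r := by
    have : Real.exp (-(r * xs)) * r = A := by
      calc Real.exp (-(r * xs)) * r
          = Real.exp (-(r * xs)) * Real.exp ((r - 1) * xs) := by rw [hrx]
        _ = Real.exp (-(r * xs) + (r - 1) * xs) := (Real.exp_add _ _).symm
        _ = A := by rw [hA']; congr 1; ring
    field_simp [← this]; rw [mul_comm]; exact this
  have h2 : Real.exp (-(r * x)) = A / r * e := by
    rw [show -(r * x) = -(r * xs) + -(r * d) by rw [hd]; ring, Real.exp_add, h3, he]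
  rw [h1, h2, h3]
  have hstep : u - e / r ≤ 1 - 1 / r := by
    have h := (div_le_div_iff_of_pos_right hr0).mpr hbern
    have : (1 + r * (u - 1)) / r = 1 / r + u - 1 := by field_simp; ring
    rw [this] at h
    linarith
  have e1 : A * u - A / r * e = A * (u - e / r) := by ring
  have e2 : A - A / r = A * (1 - 1 / r) := by ring
  rw [e1, e2]
  exact mul_le_mul_of_nonneg_left hstep hA.le

/-- The supremum of the caching energy reduction
`ΔZ(r, α, λ) = Z(α,λ) - Z(min(rα,1), λ)` with `Z(α,λ) = (1 - M/K) e^{-αλM/K}`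
over `α ∈ [0,1]` and `λ ≥ 0` equals
`(1 - M/K)(e^{-ln r/(r-1)} - e^{-r ln r/(r-1)})`,
attained at `α = 1/r` and `λ = r ln r / ((r-1) M/K)`. -/
theorem max_caching_energy_reduction
    (K M : ℝ) (hK : 1 ≤ K) (hM : 0 < M) (hMK : M < K)
    (r : ℝ) (hr : 1 < r) :
    let Z : ℝ → ℝ → ℝ := fun α l => (1 - M / K) * Real.exp (-α * l * (M / K))
    let ΔZ : ℝ → ℝ → ℝ := fun α l => Z α l - Z (min (r * α) 1) l
    let V : ℝ := (1 - M / K) *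
      (Real.exp (-Real.log r / (r - 1)) - Real.exp (-r * Real.log r / (r - 1)))
    IsGreatest {v : ℝ | ∃ α ∈ Set.Icc (0 : ℝ) 1, ∃ l : ℝ, 0 ≤ l ∧ v = ΔZ α l} V ∧
    ΔZ (1 / r) (r * Real.log r / ((r - 1) * (M / K))) = V := by
  intro Z ΔZ V
  have hK0 : 0 < K := lt_of_lt_of_le one_pos hK
  have hm : 0 < M / K := div_pos hM hK0
  have hm1 : M / K < 1 := (div_lt_one hK0).mpr hMK
  have hc : 0 < 1 - M / K := by linarith
  have hr0 : 0 < r := lt_trans one_pos hr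
  have hr1 : 0 < r - 1 := by linarith
  have hlogr : 0 < Real.log r := Real.log_pos hr
  set m := M / K
  set xs : ℝ := Real.log r / (r - 1) with hxs
  -- the value at the claimed maximizer
  have hattain : ΔZ (1 / r) (r * Real.log r / ((r - 1) * m)) = V := by
    have hmin : min (r * (1 / r)) 1 = 1 := by
      rw [mul_one_div, div_self (ne_of_gt hr0), min_self]
    simp only [ΔZ, Z, V, hmin]
    have e1 : -(1 / r) * (r * Real.log r / ((r - 1) * m)) * m = -Real.log r / (r - 1) := by
      field_simp
    have e2 : -(1:ℝ) * (r * Real.log r / ((r - 1) * m)) * m = -r * Real.log r / (r - 1) := by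
      field_simp
    rw [e1, e2]; ring
  refine ⟨⟨⟨1 / r, ⟨le_of_lt (by positivity), by
      rw [div_le_one hr0]; linarith⟩,
      r * Real.log r / ((r - 1) * m), by positivity, hattain.symm⟩, ?_⟩, hattain⟩
  rintro v ⟨α, ⟨hα0, hα1⟩, l, hl, rfl⟩
  simp only [ΔZ, Z, V]
  set x : ℝ := α * l * m with hx
  have hx0 : 0 ≤ x := by positivity
  have key := key_exp_bound hr x
  -- min(rα,1) * l * m ≥ ... gives exp bound
  have hminle : -(r * x) ≤ -(min (r * α) 1) * l * m := by
    have h1 : min (r * α) 1 * (l * m) ≤ r * α * (l * m) :=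
      mul_le_mul_of_nonneg_right (min_le_left _ _) (by positivity)
    nlinarith [h1]
  have hexp : Real.exp (-(r * x)) ≤ Real.exp (-(min (r * α) 1) * l * m) :=
    Real.exp_le_exp.mpr hminle
  have hx' : -α * l * m = -x := by rw [hx]; ring
  rw [hx']
  have e1 : -Real.log r / (r - 1) = -(Real.log r / (r - 1)) := by ring
  have e2 : -r * Real.log r / (r - 1) = -(r * (Real.log r / (r - 1))) := by ring
  rw [e1, e2]
  nlinarith [key, hexp, hc]
end

section
/- The function h : (1, ∞) → ℝ defined by h(r) = r^{-1/(r-1)} · (1 - 1/r) satisfies lim_{r → 1⁺} h(r) = 0 and lim_{r → ∞} h(r) = 1, and h is strictly increasing on (1, ∞). -/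
open Real Filter Set

/-- The normalized maximum caching energy reduction `h(r) = r^{-1/(r-1)} (1 - 1/r)`
satisfies `h(r) → 0` as `r → 1⁺`, `h(r) → 1` as `r → ∞`, and is strictly increasing
on `(1, ∞)`. -/
theorem normalized_reduction_monotone_limits :
    let h : ℝ → ℝ := fun r => r ^ (-1 / (r - 1) : ℝ) * (1 - 1 / r)
    Filter.Tendsto h (nhdsWithin 1 (Set.Ioi 1)) (nhds 0) ∧
    Filter.Tendsto h Filter.atTop (nhds 1) ∧
    StrictMonoOn h (Set.Ioi 1) := by
  intro h
  have hup : Tendsto (fun r : ℝ => 1 - 1 / r) (nhdsWithin 1 (Set.Ioi 1)) (nhds 0) := by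
    have : Tendsto (fun r : ℝ => 1 - 1 / r) (nhds 1) (nhds (1 - 1 / 1)) :=
      (tendsto_const_nhds.sub ((tendsto_const_nhds.div tendsto_id one_ne_zero)))
    simpa using this.mono_left nhdsWithin_le_nhds
  refine ⟨?_, ?_, ?_⟩
  · -- limit at 1⁺ by squeezing
    refine squeeze_zero' ?_ ?_ hup
    · filter_upwards [self_mem_nhdsWithin] with r (hr : 1 < r)
      have hr0 : (0:ℝ) < r := by linarith
      have : 1 / r ≤ 1 := by
        rw [div_le_one hr0]; linarith
      exact mul_nonneg (Real.rpow_nonneg hr0.le _) (by linarith)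
    · filter_upwards [self_mem_nhdsWithin] with r (hr : 1 < r)
      have hr0 : (0:ℝ) < r := by linarith
      have hpow : r ^ (-1 / (r - 1) : ℝ) ≤ 1 :=
        Real.rpow_le_one_of_one_le_of_nonpos hr.le
          (div_nonpos_of_nonpos_of_nonneg (by norm_num) (by linarith))
      have hnn : 0 ≤ 1 - 1 / r := by
        have : 1 / r ≤ 1 := by rw [div_le_one hr0]; linarith
        linarith
      calc h r ≤ 1 * (1 - 1 / r) := mul_le_mul_of_nonneg_right hpow hnn
        _ = 1 - 1 / r := one_mul _
  · -- limit at ∞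
    have hexp : Tendsto (fun r : ℝ => Real.exp (Real.log r * (-1 / (r - 1)))) atTop
        (nhds 1) := by
      have h0 : Tendsto (fun r : ℝ => Real.log r * (-1 / (r - 1))) atTop (nhds 0) := by
        have := (Real.tendsto_pow_log_div_mul_add_atTop 1 (-1) 1 one_ne_zero).neg
        rw [neg_zero] at this
        refine this.congr' ?_
        filter_upwards [eventually_gt_atTop (1:ℝ)] with r hr
        have : (1:ℝ) * r + -1 ≠ 0 := by intro hc; nlinarith
        rw [show (1:ℝ) * r + -1 = r - 1 by ring, pow_one]
        ring
      simpa [Function.comp_def] using (Real.continuous_exp.tendsto 0).comp h0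
    have hone : Tendsto (fun r : ℝ => 1 - 1 / r) atTop (nhds 1) := by
      have := (tendsto_const_nhds (x := (1:ℝ))).sub
        (tendsto_inv_atTop_zero : Tendsto (fun r : ℝ => r⁻¹) atTop (nhds 0))
      simpa [one_div] using this
    have := hexp.mul hone
    rw [mul_one] at this
    refine this.congr' ?_
    filter_upwards [eventually_gt_atTop (1:ℝ)] with r hr
    simp only [h]
    rw [Real.rpow_def_of_pos (by linarith)]
  · -- strict monotonicity
    set g : ℝ → ℝ := fun r => -Real.log r / (r - 1) + (Real.log (r - 1) - Real.log r)
      with hg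
    have hderiv : ∀ r ∈ Set.Ioi (1:ℝ), HasDerivAt g (Real.log r / (r - 1) ^ 2) r := by
      intro r hr
      have hr1 : (1:ℝ) < r := hr
      have hr0 : (0:ℝ) < r := by linarith
      have hrm : r - 1 ≠ 0 := by intro hc; rw [sub_eq_zero] at hc; simp [hc] at hr1
      have hlog : HasDerivAt Real.log r⁻¹ r := Real.hasDerivAt_log hr0.ne'
      have hden : HasDerivAt (fun x : ℝ => x - 1) 1 r := (hasDerivAt_id r).sub_const 1
      have hdiv : HasDerivAt (fun x : ℝ => -Real.log x / (x - 1))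
          ((-r⁻¹ * (r - 1) - -Real.log r * 1) / (r - 1) ^ 2) r :=
        hlog.neg.div hden hrm
      have hlog2 : HasDerivAt (fun x : ℝ => Real.log (x - 1)) (1 / (r - 1)) r := by
        simpa using hden.log hrm
      have := hdiv.add (hlog2.sub hlog)
      refine this.congr_deriv ?_
      have hr0' : r ≠ 0 := hr0.ne'
      field_simp
      ring
    have heq : ∀ r ∈ Set.Ioi (1:ℝ), h r = Real.exp (g r) := by
      intro r hr
      have hr1 : (1:ℝ) < r := hr
      have hr0 : (0:ℝ) < r := by linarith
      have hrm : (0:ℝ) < r - 1 := by linarith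
      show r ^ (-1 / (r - 1) : ℝ) * (1 - 1 / r) = _
      rw [Real.rpow_def_of_pos hr0, hg]
      have h1 : 1 - 1 / r = (r - 1) / r := by field_simp
      rw [h1, Real.exp_add, Real.exp_sub, Real.exp_log hrm, Real.exp_log hr0]
      ring_nf
    have hgmono : StrictMonoOn g (Set.Ioi (1:ℝ)) := by
      apply strictMonoOn_of_deriv_pos (convex_Ioi 1)
      · exact fun x hx => (hderiv x hx).continuousAt.continuousWithinAt
      · intro x hx
        rw [interior_Ioi] at hx
        rw [(hderiv x hx).deriv]
        have hx1 : (1:ℝ) < x := hx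
        exact div_pos (Real.log_pos hx1) (pow_pos (by linarith) 2)
    intro x hx y hy hxy
    rw [heq x hx, heq y hy]
    exact Real.exp_lt_exp.mpr (hgmono hx hy hxy)
end

section
/- Fix 0 < a < b, a continuous nondecreasing F : [a,b] → [0,1] with F(a)=0, F(b)=1 and F(x) < 1 on a set of positive Lebesgue measure in (a,b). Let λ > 0, r > 1, and define D(α) = W(α, λ) - W(rα, λ) where W(α, λ) = 1/b + ∫_a^b e^{λ(F(x)-1)α} F(x)/x² dx. Then D'(0) = λ(r-1) ∫_a^b (1 - F(x)) F(x) / x² dx > 0; in particular D(α) > 0 for all sufficiently small α > 0. -/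
open MeasureTheory

/-- The derivative at `0` of the energy reduction `D(α) = W(α,λ) - W(rα,λ)` equals
`λ(r-1) ∫_a^b (1 - F(x)) F(x)/x² dx > 0`; in particular `D(α) > 0` for all
sufficiently small `α > 0`. -/
theorem energy_reduction_positive_near_zero
    (a b : ℝ) (ha : 0 < a) (hab : a < b)
    (F : ℝ → ℝ) (hFcont : ContinuousOn F (Set.Icc a b))
    (hFmono : MonotoneOn F (Set.Icc a b))
    (hFrange : ∀ x ∈ Set.Icc a b, F x ∈ Set.Icc (0 : ℝ) 1)
    (hFa : F a = 0) (hFb : F b = 1)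
    (hpos : 0 < volume {x ∈ Set.Ioo a b | F x < 1})
    (l r : ℝ) (hl : 0 < l) (hr : 1 < r) :
    let W : ℝ → ℝ := fun α => 1 / b + ∫ x in a..b, Real.exp (l * (F x - 1) * α) * F x / x ^ 2
    let D : ℝ → ℝ := fun α => W α - W (r * α)
    HasDerivAt D (l * (r - 1) * ∫ x in a..b, (1 - F x) * F x / x ^ 2) 0 ∧
    0 < l * (r - 1) * ∫ x in a..b, (1 - F x) * F x / x ^ 2 ∧
    ∃ ε > 0, ∀ α : ℝ, 0 < α → α < ε → 0 < D α := by
  intro W D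
  set K := ∫ x in a..b, (1 - F x) * F x / x ^ 2 with hK
  have hx0 : ∀ x ∈ Set.Icc a b, x ≠ 0 := fun x hx => ne_of_gt (lt_of_lt_of_le ha hx.1)
  -- measurability helper
  have hsub : Set.uIoc a b ⊆ Set.Icc a b := by
    rw [Set.uIoc_of_le hab.le]; exact Set.Ioc_subset_Icc_self
  have key : ∀ g : ℝ → ℝ, ContinuousOn g (Set.Icc a b) →
      AEStronglyMeasurable g (volume.restrict (Set.uIoc a b)) := by
    intro g hg
    exact (hg.aestronglyMeasurable measurableSet_Icc).mono_measure
      (Measure.restrict_mono hsub le_rfl)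
  -- continuity of the integrand family
  have contg : ∀ c : ℝ, ContinuousOn
      (fun x => Real.exp (l * (F x - 1) * c) * F x / x ^ 2) (Set.Icc a b) := by
    intro c
    refine ContinuousOn.div ?_ (continuous_pow 2).continuousOn
      (fun x hx => pow_ne_zero 2 (hx0 x hx))
    exact (Real.continuous_exp.comp_continuousOn
      (((continuousOn_const.mul (hFcont.sub continuousOn_const))).mul
        continuousOn_const)).mul hFcont
  have contg' : ∀ c : ℝ, ContinuousOn
      (fun x => (l * (F x - 1)) * (Real.exp (l * (F x - 1) * c) * F x / x ^ 2))
      (Set.Icc a b) := fun c =>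
    (continuousOn_const.mul (hFcont.sub continuousOn_const)).mul (contg c)
  have intg : ∀ c : ℝ, IntervalIntegrable
      (fun x => Real.exp (l * (F x - 1) * c) * F x / x ^ 2) volume a b := by
    intro c
    apply ContinuousOn.intervalIntegrable
    rw [Set.uIcc_of_le hab.le]; exact contg c
  -- the inner integral function
  set I : ℝ → ℝ := fun c => ∫ x in a..b, Real.exp (l * (F x - 1) * c) * F x / x ^ 2
    with hIdef
  -- derivative under the integral sign
  have main : HasDerivAt I
      (∫ x in a..b, (l * (F x - 1)) * (Real.exp (l * (F x - 1) * 0) * F x / x ^ 2)) 0 := by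
    have := intervalIntegral.hasDerivAt_integral_of_dominated_loc_of_deriv_le
      (F := fun c x => Real.exp (l * (F x - 1) * c) * F x / x ^ 2)
      (F' := fun c x => (l * (F x - 1)) * (Real.exp (l * (F x - 1) * c) * F x / x ^ 2))
      (x₀ := (0 : ℝ)) (μ := volume) (a := a) (b := b)
      (bound := fun _ => l * (Real.exp l / a ^ 2)) (s := Metric.ball 0 1) (Metric.ball_mem_nhds 0 one_pos)
      (Filter.Eventually.of_forall fun c => key _ (contg c))
      (intg 0) (key _ (contg' 0)) ?_ ?_ ?_
    · exact this.2
    · -- bound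
      refine Filter.Eventually.of_forall fun t ht c hc => ?_
      have htI := hsub ht
      have hF0 := (hFrange t htI).1
      have hF1 := (hFrange t htI).2
      have hta : a ≤ t := htI.1
      have ht0 : (0:ℝ) < t := lt_of_lt_of_le ha hta
      rw [Real.norm_eq_abs, abs_mul]
      have h1 : |l * (F t - 1)| ≤ l := by
        rw [abs_mul, abs_of_pos hl]
        have : |F t - 1| ≤ 1 := abs_le.mpr ⟨by linarith, by linarith⟩
        nlinarith
      have h2 : |Real.exp (l * (F t - 1) * c) * F t / t ^ 2| ≤ Real.exp l / a ^ 2 := by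
        have hcb : |c| ≤ 1 := by
          have := mem_ball_iff_norm.mp hc
          simp only [sub_zero, Real.norm_eq_abs] at this
          linarith
        have harg : l * (F t - 1) * c ≤ l := by
          have habs : |l * (F t - 1) * c| ≤ l := by
            rw [abs_mul]
            calc |l * (F t - 1)| * |c| ≤ l * 1 :=
                  mul_le_mul h1 hcb (abs_nonneg c) hl.le
              _ = l := mul_one l
          linarith [(abs_le.mp habs).2]
        rw [abs_div, abs_mul, abs_of_pos (Real.exp_pos _), abs_of_nonneg hF0,
          abs_of_nonneg (by positivity : (0:ℝ) ≤ t ^ 2)]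
        apply div_le_div₀ (by positivity)
        · calc Real.exp (l * (F t - 1) * c) * F t ≤ Real.exp l * 1 :=
              mul_le_mul (Real.exp_le_exp.mpr harg) hF1 hF0 (Real.exp_pos _).le
            _ = Real.exp l := mul_one _
        · positivity
        · nlinarith
      exact mul_le_mul h1 h2 (abs_nonneg _) hl.le
    · exact intervalIntegrable_const
    · -- differentiability in the parameter
      refine Filter.Eventually.of_forall fun t ht c hc => ?_
      have h1 : HasDerivAt (fun c : ℝ => l * (F t - 1) * c) (l * (F t - 1)) c := by
        simpa using (hasDerivAt_id c).const_mul (l * (F t - 1))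
      have h2 := (h1.exp.mul_const (F t)).div_const (t ^ 2)
      exact h2.congr_deriv (by ring)
  -- rewrite the derivative
  have heq : (∫ x in a..b, (l * (F x - 1)) * (Real.exp (l * (F x - 1) * 0) * F x / x ^ 2))
      = -l * K := by
    rw [hK, ← intervalIntegral.integral_const_mul]
    apply intervalIntegral.integral_congr
    intro x _
    simp only [mul_zero, Real.exp_zero, one_mul]
    ring
  rw [heq] at main
  -- derivative of the scaled function
  have mainr : HasDerivAt (fun α => I (r * α)) (-l * K * r) 0 := by
    have h1 : HasDerivAt (fun α : ℝ => r * α) r 0 := by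
      simpa using (hasDerivAt_id (0:ℝ)).const_mul r
    have h2 : HasDerivAt (I ∘ fun α => r * α) (-l * K * r) 0 := by
      apply HasDerivAt.comp
      · rw [mul_zero]; exact main
      · exact h1
    exact h2
  -- derivative of D
  have hD : HasDerivAt D (l * (r - 1) * K) 0 := by
    have h3 : HasDerivAt (fun α => (1 / b + I α) - (1 / b + I (r * α)))
        ((0 + -l * K) - (0 + -l * K * r)) 0 :=
      ((hasDerivAt_const 0 (1/b)).add main).sub ((hasDerivAt_const 0 (1/b)).add mainr)
    have h4 : (0 + -l * K) - (0 + -l * K * r) = l * (r - 1) * K := by ring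
    rw [h4] at h3
    exact h3
  -- nonnegativity of the integrand of K
  have hh : ∀ x ∈ Set.Icc a b, 0 ≤ (1 - F x) * F x / x ^ 2 := by
    intro x hx
    have h0 := (hFrange x hx).1
    have h1 := (hFrange x hx).2
    have hx0' : (0:ℝ) < x := lt_of_lt_of_le ha hx.1
    have : (0:ℝ) < x ^ 2 := by positivity
    apply div_nonneg _ this.le
    nlinarith
  have conth : ContinuousOn (fun x => (1 - F x) * F x / x ^ 2) (Set.Icc a b) :=
    ((continuousOn_const.sub hFcont).mul hFcont).div (continuous_pow 2).continuousOn
      (fun x hx => pow_ne_zero 2 (hx0 x hx))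
  have inth : ∀ p q : ℝ, p ∈ Set.Icc a b → q ∈ Set.Icc a b →
      IntervalIntegrable (fun x => (1 - F x) * F x / x ^ 2) volume p q := by
    intro p q hp hq
    apply ContinuousOn.intervalIntegrable
    apply conth.mono
    rw [← Set.uIcc_of_le hab.le]
    exact Set.uIcc_subset_uIcc (by rwa [Set.uIcc_of_le hab.le]) (by rwa [Set.uIcc_of_le hab.le])
  -- positivity of K
  have hKpos : 0 < K := by
    -- find a point with F c = 1/2 in the open interval
    obtain ⟨c, hcmem, hFc⟩ : ∃ c ∈ Set.Icc a b, F c = 1/2 := by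
      have h5 := intermediate_value_Icc hab.le hFcont
      rw [hFa, hFb] at h5
      exact h5 (by norm_num : (1/2:ℝ) ∈ Set.Icc (0:ℝ) 1)
    have hca : a < c := by
      rcases lt_or_eq_of_le hcmem.1 with h | h
      · exact h
      · exfalso; rw [← h, hFa] at hFc; norm_num at hFc
    have hcb : c < b := by
      rcases lt_or_eq_of_le hcmem.2 with h | h
      · exact h
      · exfalso; rw [h, hFb] at hFc; norm_num at hFc
    have hcont : ContinuousAt F c := hFcont.continuousAt (Icc_mem_nhds hca hcb)
    have hnhds : F ⁻¹' Set.Ioo (1/4 : ℝ) (3/4) ∩ Set.Ioo a b ∈ nhds c := by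
      apply Filter.inter_mem _ (Ioo_mem_nhds hca hcb)
      apply hcont.preimage_mem_nhds
      apply Ioo_mem_nhds <;> rw [hFc] <;> norm_num
    obtain ⟨u, v, huv, hsubuv⟩ := mem_nhds_iff_exists_Ioo_subset.mp hnhds
    have hucv : u < c ∧ c < v := ⟨huv.1, huv.2⟩
    have hau : a ≤ u := by
      by_contra h
      push_neg at h
      have ht : (u + a) / 2 ∈ Set.Ioo u v := ⟨by linarith, by linarith [hucv.2, hca]⟩
      have := (hsubuv ht).2.1
      linarith
    have hvb : v ≤ b := by
      by_contra h
      push_neg at h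
      have ht : (b + v) / 2 ∈ Set.Ioo u v := ⟨by linarith [hucv.1, hcb], by linarith⟩
      have := (hsubuv ht).2.2
      linarith
    have huv' : u < v := lt_trans hucv.1 hucv.2
    have humem : u ∈ Set.Icc a b := ⟨hau, by linarith⟩
    have hvmem : v ∈ Set.Icc a b := ⟨by linarith, hvb⟩
    have hamem : a ∈ Set.Icc a b := ⟨le_refl a, hab.le⟩
    have hbmem : b ∈ Set.Icc a b := ⟨hab.le, le_refl b⟩
    have split1 := intervalIntegral.integral_add_adjacent_intervals
      (inth a u hamem humem) (inth u b humem hbmem)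
    have split2 := intervalIntegral.integral_add_adjacent_intervals
      (inth u v humem hvmem) (inth v b hvmem hbmem)
    have P1 : 0 ≤ ∫ x in a..u, (1 - F x) * F x / x ^ 2 :=
      intervalIntegral.integral_nonneg hau
        (fun x hx => hh x ⟨hx.1, le_trans hx.2 humem.2⟩)
    have P3 : 0 ≤ ∫ x in v..b, (1 - F x) * F x / x ^ 2 :=
      intervalIntegral.integral_nonneg hvb
        (fun x hx => hh x ⟨le_trans hvmem.1 hx.1, hx.2⟩)
    have P2 : 0 < ∫ x in u..v, (1 - F x) * F x / x ^ 2 := by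
      apply intervalIntegral.intervalIntegral_pos_of_pos_on (inth u v humem hvmem) _ huv'
      intro x hx
      have hFx := (hsubuv hx).1
      simp only [Set.mem_preimage, Set.mem_Ioo] at hFx
      have hxab := (hsubuv hx).2
      have hx0' : (0:ℝ) < x := lt_trans ha hxab.1
      have : (0:ℝ) < x ^ 2 := by positivity
      apply div_pos _ this
      nlinarith
    rw [hK, ← split1, ← split2]
    linarith
  have hL : 0 < l * (r - 1) * K := by
    apply mul_pos (mul_pos hl (by linarith)) hKpos
  refine ⟨hD, hL, ?_⟩
  -- D 0 = 0
  have hD0 : D 0 = 0 := by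
    show (1 / b + I 0) - (1 / b + I (r * 0)) = 0
    rw [mul_zero]; ring
  -- slope argument
  have hlim := hasDerivAt_iff_tendsto_slope.mp hD
  have h1 : ∀ᶠ α in nhdsWithin (0:ℝ) {(0:ℝ)}ᶜ, 0 < slope D 0 α :=
    hlim.eventually_const_lt hL
  have h2 : ∀ᶠ α in nhdsWithin (0:ℝ) (Set.Ioi 0), 0 < slope D 0 α :=
    h1.filter_mono (nhdsWithin_mono 0 (fun x hx => ne_of_gt hx))
  obtain ⟨ε, hε, hsubε⟩ := mem_nhdsGT_iff_exists_Ioo_subset.mp h2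
  refine ⟨ε, hε, fun α hα hαε => ?_⟩
  have hslope : 0 < slope D 0 α := hsubε ⟨hα, hαε⟩
  rw [slope_def_field] at hslope
  rw [hD0, sub_zero, sub_zero] at hslope
  have := mul_pos hslope hα
  rwa [div_mul_cancel₀ _ (ne_of_gt hα)] at this
end

section
/- Let K ≥ 1, 0 < M < K, λ ≥ 0, r > 1, and define ΔZ(α) = (1 - M/K)(e^{-αλM/K} - e^{-rαλM/K}) for α ∈ [0, 1/r]. If λ > r ln r/((r-1)M/K), then ΔZ attains its maximum on [0, 1/r] at the interior point α̃ = ln r/((r-1)·λ·M/K) < 1/r; if λ ≤ r ln r/((r-1)M/K), then ΔZ is nondecreasing on [0, 1/r] and attains its maximum at α = 1/r. -/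
/-- The caching energy reduction `ΔZ(α) = (1 - M/K)(e^{-αλM/K} - e^{-rαλM/K})` on
`[0, 1/r]` is maximized at the interior point `α̃ = ln r/((r-1)λM/K) < 1/r` when
`λ > r ln r/((r-1)M/K)`, and is nondecreasing with maximum at `α = 1/r` when
`λ ≤ r ln r/((r-1)M/K)`. -/
theorem caching_reduction_maximizer
    (K M : ℝ) (hK : 1 ≤ K) (hM : 0 < M) (hMK : M < K)
    (l : ℝ) (hl : 0 ≤ l) (r : ℝ) (hr : 1 < r) :
    let ΔZ : ℝ → ℝ := fun α =>
      (1 - M / K) * (Real.exp (-α * l * (M / K)) - Real.exp (-r * α * l * (M / K)))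
    ((r * Real.log r / ((r - 1) * (M / K)) < l →
        (Real.log r / ((r - 1) * l * (M / K)) < 1 / r ∧
         IsMaxOn ΔZ (Set.Icc 0 (1 / r)) (Real.log r / ((r - 1) * l * (M / K))))) ∧
     (l ≤ r * Real.log r / ((r - 1) * (M / K)) →
        (MonotoneOn ΔZ (Set.Icc 0 (1 / r)) ∧
         IsMaxOn ΔZ (Set.Icc 0 (1 / r)) (1 / r)))) := by
  intro ΔZ
  have hK0 : (0:ℝ) < K := lt_of_lt_of_le one_pos hK
  have hMK0 : 0 < M / K := div_pos hM hK0
  have hC : 0 < 1 - M / K := by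
    have : M / K < 1 := (div_lt_one hK0).2 hMK
    linarith
  have hr0 : (0:ℝ) < r := lt_trans one_pos hr
  have hr1 : (0:ℝ) < r - 1 := sub_pos.2 hr
  have hlr : 0 < Real.log r := Real.log_pos hr
  set c : ℝ := l * (M / K) with hcdef
  have hc0 : 0 ≤ c := mul_nonneg hl hMK0.le
  set f : ℝ → ℝ := fun α => Real.exp (-α * l * (M / K)) - Real.exp (-r * α * l * (M / K))
    with hfdef
  -- derivative of f
  have hder : ∀ x : ℝ, HasDerivAt f
      (Real.exp (-r * x * l * (M / K)) * (r * c) - Real.exp (-x * l * (M / K)) * c) x := by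
    intro x
    have h1 : HasDerivAt (fun α : ℝ => -α * l * (M / K)) (-c) x := by
      have e : -(1:ℝ) * l * (M / K) = -c := by rw [hcdef]; ring
      exact e ▸ (((hasDerivAt_id x).neg.mul_const l).mul_const (M / K))
    have h2 : HasDerivAt (fun α : ℝ => -r * α * l * (M / K)) (-(r * c)) x := by
      have e : -r * 1 * l * (M / K) = -(r * c) := by rw [hcdef]; ring
      exact e ▸ ((((hasDerivAt_id x).const_mul (-r)).mul_const l).mul_const (M / K))
    have := (h1.exp).sub (h2.exp)
    rw [show Real.exp (-r * x * l * (M / K)) * (r * c) - Real.exp (-x * l * (M / K)) * c = Real.exp (-x * l * (M / K)) * -c - Real.exp (-r * x * l * (M / K)) * -(r * c) by ring]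
    exact this
  have hdiff : ∀ x : ℝ, DifferentiableAt ℝ f x := fun x => (hder x).differentiableAt
  have hcont : ContinuousOn f (Set.Icc 0 (1/r)) :=
    fun x _ => (hdiff x).continuousAt.continuousWithinAt
  -- key sign fact
  have hsign : ∀ x : ℝ, deriv f x =
      Real.exp (-r * x * l * (M / K)) * (r * c) - Real.exp (-x * l * (M / K)) * c :=
    fun x => (hder x).deriv
  have key : ∀ x : ℝ, (r - 1) * c * x ≤ Real.log r → 0 ≤ deriv f x := by
    intro x hx
    rw [hsign]
    have h1 : Real.exp (-x * l * (M / K)) * c ≤ Real.exp (-r * x * l * (M / K)) * (r * c) := by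
      have : Real.exp (-x * c) ≤ r * Real.exp (-r * x * c) := by
        have : r * Real.exp (-r * x * c) = Real.exp (Real.log r + -r * x * c) := by
          rw [Real.exp_add, Real.exp_log hr0]
        rw [this]
        exact Real.exp_le_exp.2 (by nlinarith)
      calc Real.exp (-x * l * (M / K)) * c = Real.exp (-x * c) * c := by rw [hcdef]; ring_nf
        _ ≤ (r * Real.exp (-r * x * c)) * c := by nlinarith [Real.exp_pos (-x*c), Real.exp_pos (-r*x*c)]
        _ = Real.exp (-r * x * l * (M / K)) * (r * c) := by rw [hcdef]; ring_nf
    linarith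
  have key2 : ∀ x : ℝ, Real.log r ≤ (r - 1) * c * x → deriv f x ≤ 0 := by
    intro x hx
    rw [hsign]
    have : r * Real.exp (-r * x * c) ≤ Real.exp (-x * c) := by
      have h : r * Real.exp (-r * x * c) = Real.exp (Real.log r + -r * x * c) := by
        rw [Real.exp_add, Real.exp_log hr0]
      rw [h]
      exact Real.exp_le_exp.2 (by nlinarith)
    have h2 : Real.exp (-r * x * l * (M / K)) * (r * c) ≤ Real.exp (-x * l * (M / K)) * c := by
      calc Real.exp (-r * x * l * (M / K)) * (r * c) = (r * Real.exp (-r * x * c)) * c := by rw [hcdef]; ring_nf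
        _ ≤ Real.exp (-x * c) * c := by nlinarith [Real.exp_pos (-x*c), Real.exp_pos (-r*x*c)]
        _ = Real.exp (-x * l * (M / K)) * c := by rw [hcdef]; ring_nf
    linarith
  -- ΔZ monotone from f monotone
  have liftMono : ∀ s : Set ℝ, MonotoneOn f s → MonotoneOn ΔZ s := by
    intro s hf x hx y hy hxy
    exact mul_le_mul_of_nonneg_left (hf hx hy hxy) hC.le
  have liftAnti : ∀ s : Set ℝ, AntitoneOn f s → AntitoneOn ΔZ s := by
    intro s hf x hx y hy hxy
    exact mul_le_mul_of_nonneg_left (hf hx hy hxy) hC.le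
  constructor
  · -- interior maximum case
    intro hcase
    set a : ℝ := Real.log r / ((r - 1) * l * (M / K)) with hadef
    have hcbig : r * Real.log r / (r - 1) < c := by
      rw [div_lt_iff₀ hr1]
      have h0 := (div_lt_iff₀ (by positivity : (0:ℝ) < (r - 1) * (M / K))).1 hcase
      calc r * Real.log r < l * ((r - 1) * (M / K)) := h0
        _ = c * (r - 1) := by rw [hcdef]; ring
    have hcpos : 0 < c := lt_trans (by positivity) hcbig
    have hldenom : 0 < (r - 1) * l * (M / K) := by
      have hl0 : 0 < l := by
        rcases hl.lt_or_eq with h | h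
        · exact h
        · exfalso; rw [hcdef, ← h, zero_mul] at hcpos; exact lt_irrefl 0 hcpos
      positivity
    have hac : a = Real.log r / ((r - 1) * c) := by
      rw [hadef, hcdef]; ring_nf
    have hapos : 0 < a := div_pos hlr hldenom
    have halt : a < 1 / r := by
      rw [hac, div_lt_div_iff₀ (by positivity) hr0]
      calc Real.log r * r = r * Real.log r := by ring
        _ < c * (r - 1) := (div_lt_iff₀ hr1).1 hcbig
        _ = 1 * ((r - 1) * c) := by ring
    refine ⟨halt, ?_⟩
    -- monotone on [0,a], antitone on [a,1/r]
    have hm1 : MonotoneOn f (Set.Icc 0 a) := by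
      apply monotoneOn_of_deriv_nonneg (convex_Icc 0 a)
        (fun x _ => (hdiff x).continuousAt.continuousWithinAt)
        (fun x _ => (hdiff x).differentiableWithinAt)
      intro x hx
      rw [interior_Icc] at hx
      apply key
      have hxa : x ≤ a := hx.2.le
      calc (r - 1) * c * x ≤ (r - 1) * c * a :=
            mul_le_mul_of_nonneg_left hx.2.le (by positivity)
        _ = Real.log r := by rw [hac]; field_simp
    have hm2 : AntitoneOn f (Set.Icc a (1/r)) := by
      apply antitoneOn_of_deriv_nonpos (convex_Icc a (1/r))
        (fun x _ => (hdiff x).continuousAt.continuousWithinAt)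
        (fun x _ => (hdiff x).differentiableWithinAt)
      intro x hx
      rw [interior_Icc] at hx
      apply key2
      calc Real.log r = (r - 1) * c * a := by rw [hac]; field_simp
        _ ≤ (r - 1) * c * x := mul_le_mul_of_nonneg_left hx.1.le (by positivity)
    intro x hx
    simp only [Set.mem_setOf_eq]
    rcases le_total x a with h | h
    · exact mul_le_mul_of_nonneg_left (hm1 ⟨hx.1, h⟩ ⟨hx.1.trans h, le_refl a⟩ h) hC.le
    · exact mul_le_mul_of_nonneg_left (hm2 ⟨le_refl a, halt.le⟩ ⟨h, hx.2⟩ h) hC.le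
  · intro hcase
    have hcsmall : (r - 1) * c * (1/r) ≤ Real.log r := by
      have h0 := (le_div_iff₀ (by positivity : (0:ℝ) < (r - 1) * (M / K))).1 hcase
      have h2 : (r - 1) * c ≤ r * Real.log r := by
        calc (r - 1) * c = l * ((r - 1) * (M / K)) := by rw [hcdef]; ring
          _ ≤ r * Real.log r := h0
      rw [mul_one_div, div_le_iff₀ hr0]
      linarith [h2]
    have hm : MonotoneOn f (Set.Icc 0 (1/r)) := by
      apply monotoneOn_of_deriv_nonneg (convex_Icc 0 (1/r)) hcont
        (fun x _ => (hdiff x).differentiableWithinAt)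
      intro x hx
      rw [interior_Icc] at hx
      apply key
      calc (r - 1) * c * x ≤ (r - 1) * c * (1/r) :=
            mul_le_mul_of_nonneg_left hx.2.le (mul_nonneg hr1.le hc0)
        _ ≤ Real.log r := hcsmall
    have hmZ : MonotoneOn ΔZ (Set.Icc 0 (1/r)) := liftMono _ hm
    refine ⟨hmZ, ?_⟩
    intro x hx
    simp only [Set.mem_setOf_eq]
    exact hmZ hx ⟨by positivity, le_refl _⟩ hx.2
end
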